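/- Let p be a prime, l ≥ 2, and q = p^{2l}. The number of pairs (a,b) with a ∈ GF(p^l)*, b ∈ GF(q), satisfying Tr_{p^l/p}(b^{p^l+1}/a) = 0, Tr_{p^l/p}(a) = 0, and Tr_{q/p}(b) = 0, equals (p^{l−1}−1)(p^{2l−2}−p^l+p^{l−1}). -/

import Mathlib

open Finset Polynomial

namespace Stmt4Aux

variable {F : Type*} [Field F] [Fintype F] [DecidableEq F]

lemma card_eval_zero_le (f : F[X]) (hf : f ≠ 0) :
    #{x ∈ (univ : Finset F) | f.eval x = 0} ≤ f.natDegree := by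
  have h1 : {x ∈ (univ : Finset F) | f.eval x = 0} ⊆ f.roots.toFinset := by
    intro x hx
    simp only [mem_filter] at hx
    rw [Multiset.mem_toFinset, mem_roots hf]
    exact hx.2
  calc #{x ∈ (univ : Finset F) | f.eval x = 0} ≤ f.roots.toFinset.card := card_le_card h1
    _ ≤ Multiset.card f.roots := f.roots.toFinset_card_le
    _ ≤ f.natDegree := f.card_roots'

lemma exists_sum_pow_ne (p m : ℕ) (hp : 2 ≤ p) (hm : 0 < m)
    (S : Finset F) (hS : p ^ (m - 1) < S.card) :
    ∃ x ∈ S, ∑ i ∈ range m, x ^ p ^ i ≠ 0 := by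
  by_contra hcon
  push_neg at hcon
  set f : F[X] := ∑ i ∈ range m, X ^ p ^ i with hf
  have hev : ∀ x : F, f.eval x = ∑ i ∈ range m, x ^ p ^ i := by
    intro x; simp [hf, eval_finset_sum]
  have hf0 : f ≠ 0 := by
    intro h0
    have hc : f.coeff 1 = 1 := by
      rw [hf, finset_sum_coeff]
      rw [Finset.sum_eq_single 0]
      · simp
      · intro i hi hne
        rw [coeff_X_pow]
        have : (1 : ℕ) ≠ p ^ i := by
          have h2 : p ^ 1 ≤ p ^ i := Nat.pow_le_pow_right (by omega) (by omega)
          rw [pow_one] at h2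
          omega
        simp [this]
      · intro h; exact absurd (mem_range.2 hm) h
    rw [h0] at hc; simp at hc
  have hsub : S ⊆ {x ∈ (univ : Finset F) | f.eval x = 0} := by
    intro x hx
    simp only [mem_filter, mem_univ, true_and, hev]
    exact hcon x hx
  have hdeg : f.natDegree ≤ p ^ (m - 1) := by
    apply natDegree_sum_le_of_forall_le
    intro i hi
    rw [natDegree_X_pow]
    exact Nat.pow_le_pow_right (by omega) (by simp at hi; omega)
  have := (card_le_card hsub).trans ((card_eval_zero_le f hf0).trans hdeg)
  omega

omit [Fintype F] [DecidableEq F] in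
lemma pow_pow_fix {p : ℕ} (s : F) (hs : s ^ p = s) : ∀ m, s ^ p ^ m = s := by
  intro m
  induction m with
  | zero => simp
  | succ n ih => rw [pow_succ, pow_mul, ih, hs]


omit [Fintype F] [DecidableEq F] in
lemma sum_pow_frob {p : ℕ} [Fact p.Prime] [CharP F p] (x : F) (m : ℕ) (hx : x ^ p ^ m = x) :
    (∑ i ∈ range m, x ^ p ^ i) ^ p = ∑ i ∈ range m, x ^ p ^ i := by
  have h1 : (∑ i ∈ range m, x ^ p ^ i) ^ p = ∑ i ∈ range m, (x ^ p ^ i) ^ p :=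
    map_sum (frobenius F p) (fun i => x ^ p ^ i) (range m)
  rw [h1]
  have h2 : ∀ i, (x ^ p ^ i) ^ p = x ^ p ^ (i + 1) := by
    intro i; rw [← pow_mul, ← pow_succ]
  simp only [h2]
  have h3 : ∑ i ∈ range (m + 1), x ^ p ^ i
      = ∑ i ∈ range m, x ^ p ^ (i + 1) + x ^ p ^ 0 := sum_range_succ' _ m
  have h4 : ∑ i ∈ range (m + 1), x ^ p ^ i
      = ∑ i ∈ range m, x ^ p ^ i + x ^ p ^ m := sum_range_succ _ m
  rw [hx] at h4
  rw [h3] at h4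
  simpa using h4

omit [Fintype F] [DecidableEq F] in
lemma sum_pow_add {p : ℕ} [Fact p.Prime] [CharP F p] (x y : F) (m : ℕ) :
    ∑ i ∈ range m, (x + y) ^ p ^ i = ∑ i ∈ range m, x ^ p ^ i + ∑ i ∈ range m, y ^ p ^ i := by
  rw [← sum_add_distrib]
  exact Finset.sum_congr rfl fun i _ => add_pow_char_pow x y p i

omit [Fintype F] [DecidableEq F] in
lemma sum_pow_smul {p : ℕ} [Fact p.Prime] [CharP F p] (s x : F) (hs : s ^ p = s) (m : ℕ) :
    ∑ i ∈ range m, (s * x) ^ p ^ i = s * ∑ i ∈ range m, x ^ p ^ i := by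
  rw [mul_sum]
  exact Finset.sum_congr rfl fun i _ => by rw [mul_pow, pow_pow_fix s hs]

omit [DecidableEq F] in
lemma charP_of_card {p n : ℕ} (hp : p.Prime)
    (hcard : Fintype.card F = p ^ n) : CharP F p := by
  obtain ⟨q, hq⟩ := CharP.exists F
  obtain ⟨m, hqp, hcard'⟩ := @FiniteField.card F _ _ q hq
  have hqP : q = p := by
    have hdvd : q ∣ p ^ n := by
      rw [← hcard, hcard']
      exact dvd_pow_self q (by exact_mod_cast m.2.ne')
    have := hqp.dvd_of_dvd_pow hdvd
    exact ((Nat.prime_dvd_prime_iff_eq hqp hp).1 this)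
  rwa [hqP] at hq

/-- cardinality of the prime field -/
lemma card_pfix (p : ℕ) [Fact p.Prime] [CharP F p] :
    #{x ∈ (univ : Finset F) | x ^ p = x} = p := by
  have hp := (Fact.out : p.Prime)
  have hle : #{x ∈ (univ : Finset F) | x ^ p = x} ≤ p := by
    set f : F[X] := X ^ p - X with hf
    have hfev : ∀ x : F, f.eval x = 0 ↔ x ^ p = x := by
      intro x; rw [hf]; simp [sub_eq_zero]
    have hp2 := hp.two_le
    have hdeg : f.natDegree ≤ p := by
      apply le_trans (natDegree_sub_le _ _)
      simp only [natDegree_X_pow, natDegree_X]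
      omega
    have hf0 : f ≠ 0 := by
      intro h0
      have : f.coeff p = 1 := by
        rw [hf, coeff_sub, coeff_X_pow, if_pos rfl, coeff_X_of_ne_one (by omega), sub_zero]
      rw [h0] at this; simp at this
    calc #{x ∈ (univ : Finset F) | x ^ p = x}
        = #{x ∈ (univ : Finset F) | f.eval x = 0} := by
          apply congrArg; apply filter_congr; intro x _; simp [hfev]
      _ ≤ f.natDegree := card_eval_zero_le f hf0
      _ ≤ p := hdeg
  have hge : p ≤ #{x ∈ (univ : Finset F) | x ^ p = x} := by
    set ι : ZMod p →+* F := ZMod.castHom dvd_rfl F with hι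
    have hinj : Function.Injective ι := ι.injective
    have hsub : (univ : Finset (ZMod p)).image ι ⊆ {x ∈ (univ : Finset F) | x ^ p = x} := by
      intro x hx
      simp only [mem_image] at hx
      obtain ⟨z, _, rfl⟩ := hx
      simp only [mem_filter, mem_univ, true_and]
      rw [← map_pow, ZMod.pow_card]
    calc p = Fintype.card (ZMod p) := (ZMod.card p).symm
      _ = #((univ : Finset (ZMod p)).image ι) := by
          rw [card_image_of_injective _ hinj, card_univ]
      _ ≤ _ := card_le_card hsub
  omega


variable (p l : ℕ) [Fact p.Prime] [CharP F p]

omit [DecidableEq F] [Fact (Nat.Prime p)] [CharP F p] in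
lemma pow_card_self (hcard : Fintype.card F = p ^ (2 * l)) (x : F) : x ^ p ^ (2 * l) = x := by
  rw [← hcard]; exact FiniteField.pow_card x

omit [DecidableEq F] [Fact (Nat.Prime p)] [CharP F p] in
lemma pow_e_sq (hcard : Fintype.card F = p ^ (2 * l)) (x : F) : x ^ (p ^ l * p ^ l) = x := by
  have := pow_card_self p l hcard x
  rwa [two_mul, pow_add] at this

lemma norm_package (hl : 1 ≤ l) (hcard : Fintype.card F = p ^ (2 * l)) :
    #{x ∈ (univ : Finset F) | x ≠ 0 ∧ x ^ p ^ l = x} = p ^ l - 1 ∧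
    ∀ u : F, u ≠ 0 → u ^ p ^ l = u →
      #{b ∈ (univ : Finset F) | b ^ (p ^ l + 1) = u} = p ^ l + 1 := by
  have hp := (Fact.out : p.Prime)
  set e := p ^ l with he
  have he2 : 2 ≤ e := by
    calc 2 = 2 ^ 1 := rfl
    _ ≤ p ^ l := Nat.pow_le_pow_left hp.two_le l |>.trans' (Nat.pow_le_pow_right (by omega) hl)
  set Kstar : Finset F := {x ∈ univ | x ≠ 0 ∧ x ^ e = x} with hKstar
  set Fstar : Finset F := {x ∈ univ | x ≠ 0} with hFstar
  have hFcard : #Fstar = e * e - 1 := by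
    rw [hFstar, filter_ne', card_erase_of_mem (mem_univ 0), card_univ, hcard, two_mul, pow_add]
  have hmaps : ∀ b ∈ Fstar, b ^ (e + 1) ∈ Kstar := by
    intro b hb
    rw [hFstar, mem_filter] at hb
    rw [hKstar, mem_filter]
    refine ⟨mem_univ _, pow_ne_zero _ hb.2, ?_⟩
    rw [← pow_mul, add_mul, one_mul, pow_add, pow_e_sq p l hcard, ← pow_succ']
  have hsum : e * e - 1 = ∑ u ∈ Kstar, #{b ∈ Fstar | b ^ (e + 1) = u} := by
    rw [← hFcard]; exact card_eq_sum_card_fiberwise hmaps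
  have hfible : ∀ u ∈ Kstar, #{b ∈ Fstar | b ^ (e + 1) = u} ≤ e + 1 := by
    intro u _
    have hsub : {b ∈ Fstar | b ^ (e + 1) = u} ⊆
        {x ∈ (univ : Finset F) | (X ^ (e + 1) - C u).eval x = 0} := by
      intro b hb
      simp only [mem_filter] at hb ⊢
      simp [hb.2, sub_eq_zero]
    calc #{b ∈ Fstar | b ^ (e + 1) = u} ≤ _ := card_le_card hsub
      _ ≤ (X ^ (e + 1) - C u).natDegree :=
          card_eval_zero_le _ (X_pow_sub_C_ne_zero (by omega) u)
      _ = e + 1 := natDegree_X_pow_sub_C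
  have hKle : #Kstar + 1 ≤ e := by
    have h0 : (0 : F) ∉ Kstar := by simp [hKstar]
    set f : F[X] := X ^ e - X with hf
    have hsub : insert (0 : F) Kstar ⊆ {x ∈ (univ : Finset F) | f.eval x = 0} := by
      intro x hx
      rcases mem_insert.1 hx with rfl | hx
      · simp [hf, zero_pow (by omega : e ≠ 0)]
      · rw [hKstar, mem_filter] at hx
        simp [hf, sub_eq_zero, hx.2.2]
    have hf0 : f ≠ 0 := by
      intro h0'
      have : f.coeff e = 1 := by
        rw [hf, coeff_sub, coeff_X_pow, if_pos rfl, coeff_X_of_ne_one (by omega), sub_zero]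
      rw [h0'] at this; simp at this
    have hdeg : f.natDegree ≤ e := by
      apply le_trans (natDegree_sub_le _ _)
      simp only [natDegree_X_pow, natDegree_X]
      omega
    calc #Kstar + 1 = #(insert (0:F) Kstar) := (card_insert_of_notMem h0).symm
      _ ≤ #{x ∈ (univ : Finset F) | f.eval x = 0} := card_le_card hsub
      _ ≤ f.natDegree := card_eval_zero_le f hf0
      _ ≤ e := hdeg
  have harith : (e - 1) * (e + 1) = e * e - 1 := by
    clear_value e
    obtain ⟨e', rfl⟩ : ∃ e', e = e' + 1 := ⟨e - 1, by omega⟩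
    have : (e' + 1) * (e' + 1) = e' * (e' + 2) + 1 := by ring
    simp only [Nat.add_sub_cancel, this]
  have hKge : e - 1 ≤ #Kstar := by
    have h1 : e * e - 1 ≤ #Kstar * (e + 1) := by
      rw [hsum]
      calc ∑ u ∈ Kstar, #{b ∈ Fstar | b ^ (e + 1) = u}
          ≤ ∑ _u ∈ Kstar, (e + 1) := Finset.sum_le_sum hfible
        _ = #Kstar * (e + 1) := by rw [sum_const, smul_eq_mul]
    rw [← harith] at h1
    exact Nat.le_of_mul_le_mul_right h1 (by omega)
  have hKcard : #Kstar = e - 1 := by omega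
  have hfib : ∀ u ∈ Kstar, #{b ∈ Fstar | b ^ (e + 1) = u} = e + 1 := by
    have hsum2 : ∑ u ∈ Kstar, #{b ∈ Fstar | b ^ (e + 1) = u} = ∑ _u ∈ Kstar, (e + 1) := by
      rw [← hsum, sum_const, smul_eq_mul, hKcard, harith]
    intro u hu
    exact (Finset.sum_eq_sum_iff_of_le hfible).1 hsum2 u hu
  refine ⟨hKcard, fun u hu0 hue => ?_⟩
  have hu : u ∈ Kstar := by rw [hKstar, mem_filter]; exact ⟨mem_univ _, hu0, hue⟩
  have : {b ∈ Fstar | b ^ (e + 1) = u} = {b ∈ (univ : Finset F) | b ^ (e + 1) = u} := by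
    ext b
    simp only [hFstar, mem_filter, mem_univ, true_and, and_iff_right_iff_imp]
    intro hb
    intro hb0
    rw [hb0, zero_pow (by omega : e + 1 ≠ 0)] at hb
    exact hu0 hb.symm
  rw [← this]
  exact hfib u hu


lemma shift_fibers (D : Finset F) (g : F → F) (hg : ∀ x ∈ D, (g x) ^ p = g x)
    (σ : F → F → F)
    (hmem : ∀ t : F, t ^ p = t → ∀ x ∈ D, σ t x ∈ D)
    (hgσ : ∀ t : F, t ^ p = t → ∀ x ∈ D, g (σ t x) = g x + t)
    (hcanc : ∀ t : F, t ^ p = t → ∀ x ∈ D, σ (-t) (σ t x) = x)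
    (v : F) (hv : v ^ p = v) :
    p * #{x ∈ D | g x = v} = #D := by
  have hDsum : #D = ∑ w ∈ {x ∈ (univ : Finset F) | x ^ p = x}, #{x ∈ D | g x = w} :=
    card_eq_sum_card_fiberwise fun x hx => by
      rw [mem_coe, mem_filter]; exact ⟨mem_univ _, hg x hx⟩
  have hfix : ∀ t s : F, t ^ p = t → s ^ p = s → (t - s) ^ p = t - s := by
    intro t s ht hs
    rw [sub_pow_char, ht, hs]
  have hneg : ∀ t : F, t ^ p = t → (-t) ^ p = -t := by
    intro t ht
    have := map_neg (frobenius F p) t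
    simpa [frobenius_def, ht] using this
  have heqfib : ∀ w : F, w ^ p = w → #{x ∈ D | g x = w} = #{x ∈ D | g x = v} := by
    intro w hw
    apply card_nbij' (σ (v - w)) (σ (w - v))
    · intro x hx
      rw [mem_coe, mem_filter] at hx
      rw [mem_coe, mem_filter]
      exact ⟨hmem _ (hfix v w hv hw) x hx.1,
        by rw [hgσ _ (hfix v w hv hw) x hx.1, hx.2]; ring⟩
    · intro x hx
      rw [mem_coe, mem_filter] at hx
      rw [mem_coe, mem_filter]
      exact ⟨hmem _ (hfix w v hw hv) x hx.1,
        by rw [hgσ _ (hfix w v hw hv) x hx.1, hx.2]; ring⟩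
    · intro x hx
      rw [mem_coe, mem_filter] at hx
      have := hcanc (v - w) (hfix v w hv hw) x hx.1
      rwa [neg_sub] at this
    · intro x hx
      rw [mem_coe, mem_filter] at hx
      have := hcanc (w - v) (hfix w v hw hv) x hx.1
      rwa [neg_sub] at this
  rw [hDsum, Finset.sum_congr rfl fun w hw => heqfib w (by simpa using (mem_filter.1 hw).2),
    sum_const, smul_eq_mul, card_pfix p]


lemma card_K (hl : 1 ≤ l) (hcard : Fintype.card F = p ^ (2 * l)) :
    #{x ∈ (univ : Finset F) | x ^ p ^ l = x} = p ^ l := by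
  have hp := (Fact.out : p.Prime)
  have h := (norm_package p l hl hcard).1
  have hins : {x ∈ (univ : Finset F) | x ^ p ^ l = x}
      = insert 0 {x ∈ (univ : Finset F) | x ≠ 0 ∧ x ^ p ^ l = x} := by
    ext x
    simp only [mem_filter, mem_insert, mem_univ, true_and]
    constructor
    · intro hx
      by_cases h0 : x = 0
      · exact Or.inl h0
      · exact Or.inr ⟨h0, hx⟩
    · rintro (rfl | hx)
      · exact zero_pow (Nat.pow_pos hp.pos).ne'
      · exact hx.2
  have hpl : 1 ≤ p ^ l := Nat.one_le_pow _ _ hp.pos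
  rw [hins, card_insert_of_notMem (by simp), h]
  omega

lemma card_K_trace_zero (hl : 1 ≤ l) (hcard : Fintype.card F = p ^ (2 * l)) :
    #{x ∈ (univ : Finset F) | x ^ p ^ l = x ∧ ∑ i ∈ range l, x ^ p ^ i = 0}
      = p ^ (l - 1) := by
  have hp := (Fact.out : p.Prime)
  set D : Finset F := {x ∈ (univ : Finset F) | x ^ p ^ l = x} with hD
  set g : F → F := fun x => ∑ i ∈ range l, x ^ p ^ i with hg
  have hDmem : ∀ x : F, x ∈ D ↔ x ^ p ^ l = x := by
    intro x; rw [hD, mem_filter]; simp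
  have hDcard : #D = p ^ l := card_K p l hl hcard
  have hgfix : ∀ x ∈ D, (g x) ^ p = g x := by
    intro x hx
    exact sum_pow_frob x l ((hDmem x).1 hx)
  obtain ⟨x0, hx0D, hx0⟩ : ∃ x ∈ D, g x ≠ 0 := by
    apply exists_sum_pow_ne p l hp.two_le (by omega)
    rw [hDcard]
    exact Nat.pow_lt_pow_right hp.one_lt (by omega)
  set c : F := g x0 with hc
  have hcp : c ^ p = c := hgfix x0 hx0D
  set σ : F → F → F := fun t x => x + t / c * x0 with hσ
  have hsp : ∀ t : F, t ^ p = t → (t / c) ^ p = t / c := by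
    intro t ht; rw [div_pow, ht, hcp]
  have hmem : ∀ t : F, t ^ p = t → ∀ x ∈ D, σ t x ∈ D := by
    intro t ht x hx
    rw [hDmem] at hx ⊢
    rw [hσ]
    have h1 : (x + t / c * x0) ^ p ^ l = x ^ p ^ l + (t / c * x0) ^ p ^ l :=
      add_pow_char_pow _ _ p l
    rw [h1, hx, mul_pow, pow_pow_fix (t / c) (hsp t ht) l, (hDmem x0).1 hx0D]
  have hcval : (∑ i ∈ range l, x0 ^ p ^ i) = c := by rw [hc, hg]
  have hcne : c ≠ 0 := hx0
  have hgσ : ∀ t : F, t ^ p = t → ∀ x ∈ D, g (σ t x) = g x + t := by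
    intro t ht x _
    simp only [hσ, hg]
    rw [sum_pow_add, sum_pow_smul (t / c) x0 (hsp t ht) l, hcval,
      div_mul_cancel₀ t hcne]
  have hcanc : ∀ t : F, t ^ p = t → ∀ x ∈ D, σ (-t) (σ t x) = x := by
    intro t _ x _
    simp only [hσ]
    field_simp
    ring
  have key := shift_fibers p D g hgfix σ hmem hgσ hcanc 0 (zero_pow hp.ne_zero)
  have h0fib : {x ∈ D | g x = 0}
      = {x ∈ (univ : Finset F) | x ^ p ^ l = x ∧ ∑ i ∈ range l, x ^ p ^ i = 0} := by
    rw [hD, filter_filter]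
  rw [h0fib, hDcard] at key
  apply Nat.eq_of_mul_eq_mul_left hp.pos
  rw [key, ← pow_succ']
  congr 1
  omega


omit [Fintype F] [DecidableEq F] [Fact (Nat.Prime p)] [CharP F p] in
lemma sum_split (m : ℕ) (f : ℕ → F) :
    ∑ i ∈ range (2 * m), f i = ∑ i ∈ range m, f i + ∑ i ∈ range m, f (m + i) := by
  have h1 : ∑ i ∈ Ico m (m + m), f i = ∑ i ∈ range m, f (m + i) := by
    rw [Finset.sum_Ico_eq_sum_range]
    have h2 : m + m - m = m := by omega
    rw [h2]
  rw [two_mul, range_eq_Ico, ← Finset.sum_Ico_consecutive _ (Nat.zero_le m) (Nat.le_add_right m m),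
    h1, ← range_eq_Ico]

/-- The core count: for fixed admissible `a`, the number of good `b`. -/
lemma count_b (hl : 2 ≤ l) (hcard : Fintype.card F = p ^ (2 * l))
    (a : F) (ha0 : a ≠ 0) (hae : a ^ p ^ l = a) (hatr : ∑ i ∈ range l, a ^ p ^ i = 0) :
    #{b ∈ (univ : Finset F) |
        (∑ i ∈ range l, (b ^ (p ^ l + 1) / a) ^ p ^ i) = 0 ∧
        (∑ i ∈ range (2 * l), b ^ p ^ i) = 0}
      = p ^ (2 * l - 2) - p ^ l + p ^ (l - 1) := by
  have hp := (Fact.out : p.Prime)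
  set Q : F → F := fun b => ∑ i ∈ range l, (b ^ (p ^ l + 1) / a) ^ p ^ i with hQ
  set T : F → F := fun b => ∑ i ∈ range (2 * l), b ^ p ^ i with hT
  have hQdef : ∀ b : F, Q b = ∑ i ∈ range l, (b ^ (p ^ l + 1) / a) ^ p ^ i := fun _ => rfl
  have hTdef : ∀ b : F, T b = ∑ i ∈ range (2 * l), b ^ p ^ i := fun _ => rfl
  show #{b ∈ (univ : Finset F) | Q b = 0 ∧ T b = 0} = _
  -- basic power facts
  have hple : (0:ℕ) < p ^ l := Nat.pow_pos hp.pos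
  have hNfix : ∀ b : F, (b ^ (p ^ l + 1)) ^ p ^ l = b ^ (p ^ l + 1) := by
    intro b
    rw [← pow_mul, add_mul, one_mul, pow_add, pow_e_sq p l hcard, ← pow_succ']
  have hufix : ∀ b : F, (b ^ (p ^ l + 1) / a) ^ p ^ l = b ^ (p ^ l + 1) / a := by
    intro b; rw [div_pow, hNfix, hae]
  have hQfix : ∀ b : F, Q b ^ p = Q b := fun b => sum_pow_frob _ l (hufix b)
  have hTfix : ∀ b : F, T b ^ p = T b :=
    fun b => sum_pow_frob b (2 * l) (pow_card_self p l hcard b)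
  have hTadd : ∀ x y : F, T (x + y) = T x + T y := by
    intro x y; rw [hTdef, hTdef, hTdef]; exact sum_pow_add x y (2 * l)
  have hTsmul : ∀ s x : F, s ^ p = s → T (s * x) = s * T x := by
    intro s x hs; rw [hTdef, hTdef]; exact sum_pow_smul s x hs (2 * l)
  -- trace splitting
  have hsplitx : ∀ x : F, T x = (∑ i ∈ range l, x ^ p ^ i) +
      ∑ i ∈ range l, (x ^ p ^ l) ^ p ^ i := by
    intro x
    rw [hTdef, sum_split]
    congr 1
    refine Finset.sum_congr rfl fun i _ => ?_
    rw [← pow_mul, ← pow_add]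
  have hTa : T a = 0 := by
    rw [hsplitx, hae, hatr, add_zero]
  -- shift identities
  have hTshift : ∀ s b : F, s ^ p = s → T (b + s * a) = T b := by
    intro s b hs
    rw [hTadd, hTsmul s a hs, hTa, mul_zero, add_zero]
  have hQshift : ∀ s b : F, s ^ p = s → Q (b + s * a) = Q b + s * T b := by
    intro s b hs
    have hse : s ^ p ^ l = s := pow_pow_fix s hs l
    have h1 : (b + s * a) ^ (p ^ l + 1) / a
        = b ^ (p ^ l + 1) / a + (s * (b ^ p ^ l + b) + s * s * a) := by
      rw [pow_succ]
      have h2 : (b + s * a) ^ p ^ l = b ^ p ^ l + s * a := by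
        rw [add_pow_char_pow _ _ p l, mul_pow, hse, hae]
      rw [h2]
      field_simp
      ring
    have h3 : Q (b + s * a)
        = ∑ i ∈ range l,
            (b ^ (p ^ l + 1) / a + (s * (b ^ p ^ l + b) + s * s * a)) ^ p ^ i := by
      rw [hQdef]
      exact Finset.sum_congr rfl fun i _ => by rw [h1]
    have h4 : ∑ i ∈ range l, (b ^ p ^ l + b) ^ p ^ i = T b := by
      rw [sum_pow_add, hsplitx b]
      ring
    rw [h3, sum_pow_add, sum_pow_add, sum_pow_smul s _ hs l,
      sum_pow_smul (s * s) a (by rw [mul_pow, hs]) l, hatr, mul_zero, add_zero,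
      h4, ← hQdef]
  -- Step 1: count of { b | Q b = 0 }
  have hNP := norm_package p l (by omega) hcard
  set V : Finset F := {u ∈ (univ : Finset F) | u ^ p ^ l = u ∧ ∑ i ∈ range l, (u / a) ^ p ^ i = 0}
    with hV
  have hVcard : #V = p ^ (l - 1) := by
    rw [← card_K_trace_zero p l (by omega) hcard]
    apply card_nbij' (fun u => u / a) (fun v => v * a)
    · intro u hu
      simp only [hV, mem_coe, mem_filter] at hu
      simp only [mem_coe, mem_filter, mem_univ, true_and]
      exact ⟨by rw [div_pow, hu.2.1, hae], hu.2.2⟩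
    · intro v hv
      simp only [mem_coe, mem_filter, mem_univ, true_and] at hv
      simp only [hV, mem_coe, mem_filter]
      have hva : v * a / a = v := mul_div_cancel_right₀ v ha0
      exact ⟨mem_univ _, by rw [mul_pow, hv.1, hae], by rw [hva]; exact hv.2⟩
    · intro u _
      exact div_mul_cancel₀ u ha0
    · intro v _
      exact mul_div_cancel_right₀ v ha0
  have h0V : (0 : F) ∈ V := by
    rw [hV, mem_filter]
    refine ⟨mem_univ _, zero_pow hple.ne', ?_⟩
    rw [zero_div]
    exact Finset.sum_eq_zero fun i _ => zero_pow (Nat.pow_pos hp.pos).ne'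
  have hAsum : #{b ∈ (univ : Finset F) | Q b = 0}
      = ∑ u ∈ V, #{b ∈ (univ : Finset F) | b ^ (p ^ l + 1) = u} := by
    have hmaps : ∀ b ∈ {b ∈ (univ : Finset F) | Q b = 0}, b ^ (p ^ l + 1) ∈ V := by
      intro b hb
      rw [mem_filter] at hb
      rw [hV, mem_filter]
      refine ⟨mem_univ _, hNfix b, ?_⟩
      rw [← hQdef]
      exact hb.2
    rw [card_eq_sum_card_fiberwise hmaps]
    refine Finset.sum_congr rfl fun u hu => ?_
    congr 1
    rw [filter_filter]
    apply filter_congr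
    intro b _
    constructor
    · rintro ⟨_, h2⟩; exact h2
    · intro hbu
      rw [hV, mem_filter] at hu
      refine ⟨?_, hbu⟩
      rw [hQdef, Finset.sum_congr rfl fun i _ => by rw [hbu]]
      exact hu.2.2
  have hfib0 : #{b ∈ (univ : Finset F) | b ^ (p ^ l + 1) = (0:F)} = 1 := by
    have h5 : {b ∈ (univ : Finset F) | b ^ (p ^ l + 1) = (0:F)} = {0} := by
      ext b
      simp only [mem_filter, mem_univ, true_and, mem_singleton]
      rw [pow_eq_zero_iff (by omega : p ^ l + 1 ≠ 0)]
    rw [h5, card_singleton]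
  have hAval : #{b ∈ (univ : Finset F) | Q b = 0}
      = 1 + (p ^ (l - 1) - 1) * (p ^ l + 1) := by
    rw [hAsum, ← Finset.add_sum_erase _ _ h0V, hfib0]
    congr 1
    rw [Finset.sum_congr rfl (fun u hu => ?_), sum_const, smul_eq_mul, card_erase_of_mem h0V,
      hVcard]
    have hu0 : u ≠ 0 := (Finset.mem_erase.1 hu).1
    have huV := (Finset.mem_erase.1 hu).2
    rw [hV, mem_filter] at huV
    exact hNP.2 u hu0 huV.2.1
  -- Step 2: fibers over the absolute trace
  set P : Finset F := {x ∈ (univ : Finset F) | x ^ p = x} with hP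
  have h0P : (0 : F) ∈ P := by
    rw [hP, mem_filter]
    exact ⟨mem_univ _, zero_pow hp.ne_zero⟩
  have hstep2 : #{b ∈ (univ : Finset F) | Q b = 0}
      = ∑ τ ∈ P, #{b ∈ (univ : Finset F) | Q b = 0 ∧ T b = τ} := by
    have hmaps : ∀ b ∈ {b ∈ (univ : Finset F) | Q b = 0}, T b ∈ P := by
      intro b _
      rw [hP, mem_filter]
      exact ⟨mem_univ _, hTfix b⟩
    rw [card_eq_sum_card_fiberwise hmaps]
    exact Finset.sum_congr rfl fun τ _ => by rw [filter_filter]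
  -- all T-fibers have size p^(2l-1)
  obtain ⟨x1, hx1⟩ : ∃ x : F, T x ≠ 0 := by
    obtain ⟨x, _, hx2⟩ := exists_sum_pow_ne p (2 * l) hp.two_le (by omega) (univ : Finset F)
      (by rw [card_univ, hcard]; exact Nat.pow_lt_pow_right hp.one_lt (by omega))
    exact ⟨x, by rw [hTdef]; exact hx2⟩
  have hTfiber : ∀ τ : F, τ ^ p = τ →
      p * #{b ∈ (univ : Finset F) | T b = τ} = p ^ (2 * l) := by
    intro τ hτ
    have hcp : T x1 ^ p = T x1 := hTfix x1
    have hmem : ∀ t : F, t ^ p = t → ∀ x ∈ (univ : Finset F), x + t / T x1 * x1 ∈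
        (univ : Finset F) := fun _ _ x _ => mem_univ _
    have hgσ : ∀ t : F, t ^ p = t → ∀ x ∈ (univ : Finset F),
        T (x + t / T x1 * x1) = T x + t := by
      intro t ht x _
      rw [hTadd, hTsmul _ _ (by rw [div_pow, ht, hcp]), div_mul_cancel₀ t hx1]
    have hcanc : ∀ t : F, t ^ p = t → ∀ x ∈ (univ : Finset F),
        (x + t / T x1 * x1) + (-t) / T x1 * x1 = x := by
      intro t _ x _
      field_simp
      ring
    have key := shift_fibers p (univ : Finset F) T (fun b _ => hTfix b)
      (fun t x => x + t / T x1 * x1) hmem hgσ hcanc τ hτ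
    rwa [card_univ, hcard] at key
  -- Step 3: joint fibers for nonzero τ
  have hQTfiber : ∀ τ : F, τ ^ p = τ → τ ≠ 0 →
      p * (p * #{b ∈ (univ : Finset F) | Q b = 0 ∧ T b = τ}) = p ^ (2 * l) := by
    intro τ hτ hτ0
    have hmem : ∀ t : F, t ^ p = t → ∀ b ∈ {b ∈ (univ : Finset F) | T b = τ},
        b + t / τ * a ∈ {b ∈ (univ : Finset F) | T b = τ} := by
      intro t ht b hb
      rw [mem_filter] at hb ⊢
      exact ⟨mem_univ _, by rw [hTshift _ _ (by rw [div_pow, ht, hτ])]; exact hb.2⟩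
    have hgσ : ∀ t : F, t ^ p = t → ∀ b ∈ {b ∈ (univ : Finset F) | T b = τ},
        Q (b + t / τ * a) = Q b + t := by
      intro t ht b hb
      rw [mem_filter] at hb
      rw [hQshift _ _ (by rw [div_pow, ht, hτ]), hb.2, div_mul_cancel₀ t hτ0]
    have hcanc : ∀ t : F, t ^ p = t → ∀ b ∈ {b ∈ (univ : Finset F) | T b = τ},
        (b + t / τ * a) + (-t) / τ * a = b := by
      intro t _ b _
      field_simp
      ring
    have key := shift_fibers p _ Q (fun b _ => hQfix b)
      (fun t b => b + t / τ * a) hmem hgσ hcanc 0 (zero_pow hp.ne_zero)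
    have hswap : {b ∈ {b ∈ (univ : Finset F) | T b = τ} | Q b = 0}
        = {b ∈ (univ : Finset F) | Q b = 0 ∧ T b = τ} := by
      rw [filter_filter]
      apply filter_congr
      intro b _
      exact and_comm
    rw [hswap] at key
    rw [key]
    exact hTfiber τ hτ
  -- assemble
  have hPcard : #P = p := card_pfix p
  have hbig : p * p * #{b ∈ (univ : Finset F) | Q b = 0 ∧ T b = 0} + (p - 1) * p ^ (2 * l)
      = p * p * (1 + (p ^ (l - 1) - 1) * (p ^ l + 1)) := by
    rw [← hAval, hstep2, Finset.mul_sum, ← Finset.add_sum_erase _ _ h0P]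
    congr 1
    have hconst : ∀ τ ∈ P.erase 0,
        p * p * #{b ∈ (univ : Finset F) | Q b = 0 ∧ T b = τ} = p ^ (2 * l) := by
      intro τ hτ
      have hτ0 := (Finset.mem_erase.1 hτ).1
      have hτP := (Finset.mem_erase.1 hτ).2
      rw [hP, mem_filter] at hτP
      rw [mul_assoc]
      exact hQTfiber τ hτP.2 hτ0
    rw [Finset.sum_congr rfl hconst, sum_const, smul_eq_mul, card_erase_of_mem h0P, hPcard]
  -- final arithmetic
  have hu1 : 1 ≤ p ^ (l - 1) := Nat.one_le_pow _ _ hp.pos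
  have hup : p ≤ p ^ (l - 1) := by
    calc p = p ^ 1 := (pow_one p).symm
      _ ≤ p ^ (l - 1) := Nat.pow_le_pow_right hp.pos (by omega)
  have hpl2 : p ^ l = p * p ^ (l - 1) := by
    rw [← pow_succ']
    congr 1
    omega
  have h2l : p ^ (2 * l) = p * p * (p ^ (l - 1) * p ^ (l - 1)) := by
    have h6 : 2 * l = 1 + 1 + ((l - 1) + (l - 1)) := by omega
    rw [h6, pow_add, pow_add, pow_add, pow_one]
  have h2l2 : p ^ (2 * l - 2) = p ^ (l - 1) * p ^ (l - 1) := by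
    have h7 : 2 * l - 2 = (l - 1) + (l - 1) := by omega
    rw [h7, pow_add]
  rw [h2l2, hpl2]
  have hmul : p * p ^ (l - 1) ≤ p ^ (l - 1) * p ^ (l - 1) := Nat.mul_le_mul_right _ hup
  rw [h2l, hpl2] at hbig
  zify [hu1, hp.one_le, hmul] at hbig ⊢
  have hcancel : ((p : ℤ) * p) * #{b ∈ (univ : Finset F) | Q b = 0 ∧ T b = 0}
      = ((p : ℤ) * p) * ((p:ℤ) ^ (l-1) * (p:ℤ) ^ (l-1) - (p:ℤ) * (p:ℤ) ^ (l-1) + (p:ℤ) ^ (l-1))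
      := by linear_combination hbig
  have hpp : ((p : ℤ) * p) ≠ 0 := by
    have : (0:ℤ) < (p:ℤ) := by exact_mod_cast hp.pos
    positivity
  exact mul_left_cancel₀ hpp hcancel



/-- count of admissible `a` -/
lemma count_a (hl : 2 ≤ l) (hcard : Fintype.card F = p ^ (2 * l)) :
    #{x ∈ (univ : Finset F) | x ≠ 0 ∧ x ^ p ^ l = x ∧ ∑ i ∈ range l, x ^ p ^ i = 0}
      = p ^ (l - 1) - 1 := by
  have hp := (Fact.out : p.Prime)
  set W : Finset F := {x ∈ (univ : Finset F) | x ^ p ^ l = x ∧ ∑ i ∈ range l, x ^ p ^ i = 0}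
    with hW
  have hWcard : #W = p ^ (l - 1) := card_K_trace_zero p l (by omega) hcard
  have h0W : (0 : F) ∈ W := by
    rw [hW, mem_filter]
    refine ⟨mem_univ _, zero_pow (Nat.pow_pos hp.pos).ne', ?_⟩
    exact Finset.sum_eq_zero fun i _ => zero_pow (Nat.pow_pos hp.pos).ne'
  have heq : {x ∈ (univ : Finset F) | x ≠ 0 ∧ x ^ p ^ l = x ∧ ∑ i ∈ range l, x ^ p ^ i = 0}
      = W.erase 0 := by
    ext x
    rw [Finset.mem_erase, hW, mem_filter, mem_filter]
    tauto
  rw [heq, card_erase_of_mem h0W, hWcard]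

end Stmt4Aux

open Finset Stmt4Aux in
/-- Let `p` be a prime, `l ≥ 2`, `q = p^{2l}`, and `F = GF(q)`.  The subfield `GF(p^l)` is
identified with `{u : F // u^{p^l} = u}`, `Tr_{p^l/p}(u) = Σ_{i<l} u^{p^i}` and
`Tr_{q/p}(x) = Σ_{i<2l} x^{p^i}`.  The number of pairs `(a,b)` with `a ∈ GF(p^l)*`,
`b ∈ GF(q)`, satisfying `Tr_{p^l/p}(b^{p^l+1}/a) = 0`, `Tr_{p^l/p}(a) = 0` and
`Tr_{q/p}(b) = 0` equals `(p^{l−1}−1)(p^{2l−2}−p^l+p^{l−1})`. -/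
theorem stmt4 (p l : ℕ) (hp : p.Prime) (hl : 2 ≤ l) (F : Type*) [Field F] [Fintype F]
    (hcard : Fintype.card F = p ^ (2 * l)) :
    Set.ncard {ab : F × F |
        ab.1 ≠ 0 ∧ ab.1 ^ p ^ l = ab.1 ∧
        (∑ i ∈ Finset.range l, (ab.2 ^ (p ^ l + 1) / ab.1) ^ p ^ i) = 0 ∧
        (∑ i ∈ Finset.range l, ab.1 ^ p ^ i) = 0 ∧
        (∑ i ∈ Finset.range (2 * l), ab.2 ^ p ^ i) = 0} =
      (p ^ (l - 1) - 1) * (p ^ (2 * l - 2) - p ^ l + p ^ (l - 1)) := by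
  classical
  haveI hp2 : Fact p.Prime := ⟨hp⟩
  haveI hchar : CharP F p := charP_of_card hp hcard
  set S : Finset (F × F) := {ab ∈ (univ : Finset (F × F)) |
      ab.1 ≠ 0 ∧ ab.1 ^ p ^ l = ab.1 ∧
      (∑ i ∈ Finset.range l, (ab.2 ^ (p ^ l + 1) / ab.1) ^ p ^ i) = 0 ∧
      (∑ i ∈ Finset.range l, ab.1 ^ p ^ i) = 0 ∧
      (∑ i ∈ Finset.range (2 * l), ab.2 ^ p ^ i) = 0} with hS
  have hset : {ab : F × F |
      ab.1 ≠ 0 ∧ ab.1 ^ p ^ l = ab.1 ∧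
      (∑ i ∈ Finset.range l, (ab.2 ^ (p ^ l + 1) / ab.1) ^ p ^ i) = 0 ∧
      (∑ i ∈ Finset.range l, ab.1 ^ p ^ i) = 0 ∧
      (∑ i ∈ Finset.range (2 * l), ab.2 ^ p ^ i) = 0} = ↑S := by
    ext ab
    simp [hS]
  rw [hset, Set.ncard_coe_finset]
  set A : Finset F :=
    {x ∈ (univ : Finset F) | x ≠ 0 ∧ x ^ p ^ l = x ∧ ∑ i ∈ range l, x ^ p ^ i = 0} with hA
  have hmaps : ∀ ab ∈ S, ab.1 ∈ A := by
    intro ab hab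
    rw [hS, mem_filter] at hab
    rw [hA, mem_filter]
    exact ⟨mem_univ _, hab.2.1, hab.2.2.1, hab.2.2.2.2.1⟩
  rw [card_eq_sum_card_fiberwise hmaps]
  have hfib : ∀ x ∈ A, #{ab ∈ S | ab.1 = x}
      = p ^ (2 * l - 2) - p ^ l + p ^ (l - 1) := by
    intro x hx
    rw [hA, mem_filter] at hx
    obtain ⟨-, hx0, hxe, hxtr⟩ := hx
    rw [← count_b p l hl hcard x hx0 hxe hxtr]
    apply card_nbij' (fun ab => ab.2) (fun b => (x, b))
    · intro ab hab
      rw [mem_coe, mem_filter] at hab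
      obtain ⟨habS, hab1⟩ := hab
      rw [hS, mem_filter] at habS
      rw [mem_coe, mem_filter]
      rw [hab1] at habS
      exact ⟨mem_univ _, habS.2.2.2.1, habS.2.2.2.2.2⟩
    · intro b hb
      rw [mem_coe, mem_filter] at hb
      rw [mem_coe, mem_filter, hS, mem_filter]
      exact ⟨⟨mem_univ _, hx0, hxe, hb.2.1, hxtr, hb.2.2⟩, rfl⟩
    · intro ab hab
      rw [mem_coe, mem_filter] at hab
      rw [← hab.2]
    · intro b _
      rfl
  rw [Finset.sum_congr rfl hfib, sum_const, smul_eq_mul, count_a p l hl hcard]
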